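/- Let p and q be distinct primes, let ω_p = e^{2πi/p}, ω_q = e^{2πi/q}, and let b_0, …, b_{q−1} be integers. If (1 − ω_p) divides Σ_{i=0}^{q−1} b_i ω_q^i in the ring of integers ℤ[ω_{pq}] of the cyclotomic field ℚ(ω_{pq}), then in fact p divides Σ_{i=0}^{q−1} b_i ω_q^i in ℤ[ω_{pq}]. -/

import Mathlib

open Polynomial

/-- `primRoot m` is the primitive `m`-th root of unity `e^{2πi/m}`. -/
noncomputable def primRoot (m : ℕ) : ℂ :=
  Complex.exp (2 * Real.pi * Complex.I / m)

lemma primRoot_pow_eq (m n : ℕ) (hm : m ≠ 0) (hn : n ≠ 0) :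
    primRoot (m * n) ^ n = primRoot m := by
  unfold primRoot
  rw [← Complex.exp_nat_mul]
  congr 1
  have hm' : (m : ℂ) ≠ 0 := Nat.cast_ne_zero.mpr hm
  have hn' : (n : ℂ) ≠ 0 := Nat.cast_ne_zero.mpr hn
  push_cast
  field_simp

theorem stmt_6 (p q : ℕ) (hp : p.Prime) (hq : q.Prime) (hne : p ≠ q)
    (b : ℕ → ℤ)
    (hdvd : ∃ γ ∈ Algebra.adjoin ℤ ({primRoot (p * q)} : Set ℂ),
      (∑ i ∈ Finset.range q, (b i : ℂ) * primRoot q ^ i) = (1 - primRoot p) * γ) :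
    ∃ γ ∈ Algebra.adjoin ℤ ({primRoot (p * q)} : Set ℂ),
      (∑ i ∈ Finset.range q, (b i : ℂ) * primRoot q ^ i) = (p : ℂ) * γ := by
  haveI : Fact p.Prime := ⟨hp⟩
  haveI : Fact q.Prime := ⟨hq⟩
  have hp0 : p ≠ 0 := hp.ne_zero
  have hq0 : q ≠ 0 := hq.ne_zero
  have hpq0 : p * q ≠ 0 := by positivity
  set ζ : ℂ := primRoot (p * q) with hζdef
  have hζ : IsPrimitiveRoot ζ (p * q) := Complex.isPrimitiveRoot_exp _ hpq0
  have hωq : ζ ^ p = primRoot q := by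
    rw [hζdef, mul_comm p q]; exact primRoot_pow_eq q p hq0 hp0
  have hωp : ζ ^ q = primRoot p := primRoot_pow_eq p q hp0 hq0
  have hωqprim : IsPrimitiveRoot (primRoot q) q := Complex.isPrimitiveRoot_exp _ hq0
  -- the polynomial f
  set f : ℤ[X] := ∑ i ∈ Finset.range q, C (b i) * X ^ i with hfdef
  have hfeval : ∀ z : ℂ, aeval z f = ∑ i ∈ Finset.range q, (b i : ℂ) * z ^ i := by
    intro z
    rw [hfdef, map_sum]
    simp
  obtain ⟨γ, hγmem, hγ⟩ := hdvd
  rw [Algebra.adjoin_singleton_eq_range_aeval] at hγmem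
  obtain ⟨g, hg⟩ := hγmem
  -- F vanishes at ζ
  set F : ℤ[X] := f.comp (X ^ p) - (1 - X ^ q) * g with hFdef
  have hg' : aeval ζ g = γ := hg
  have hFζ : aeval ζ F = 0 := by
    rw [hFdef, map_sub, map_mul, aeval_comp, map_pow, aeval_X, map_sub, map_one, map_pow,
      aeval_X, hg', hωp, hfeval, hωq, hγ]
    ring
  -- cyclotomic (p*q) divides F
  have hmin : cyclotomic (p * q) ℤ = minpoly ℤ ζ :=
    Polynomial.cyclotomic_eq_minpoly hζ (Nat.pos_of_ne_zero hpq0)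
  obtain ⟨k, hk⟩ : cyclotomic (p * q) ℤ ∣ F := by
    rw [hmin]
    exact minpoly.isIntegrallyClosed_dvd (hζ.isIntegral (Nat.pos_of_ne_zero hpq0)) hFζ
  -- inverse of p mod q
  have hpq : (p : ZMod q) ≠ 0 := by
    rw [Ne, ZMod.natCast_eq_zero_iff]
    exact fun h => hne ((Nat.prime_dvd_prime_iff_eq hq hp).mp h).symm
  set a : ℕ := ((p : ZMod q)⁻¹).val with hadef
  have hpa : ((p * a : ℕ) : ZMod q) = 1 := by
    push_cast
    rw [hadef, ZMod.natCast_val, ZMod.cast_id]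
    exact mul_inv_cancel₀ hpq
  obtain ⟨t, ht⟩ : ∃ t, p * a = 1 + q * t := by
    have h1 : (p * a) % q = 1 % q :=
      (ZMod.natCast_eq_natCast_iff (p * a) 1 q).mp (by simpa using hpa)
    have h2 : 1 % q = 1 := Nat.mod_eq_of_lt hq.one_lt
    have h4 := Nat.div_add_mod (p * a) q
    exact ⟨p * a / q, by omega⟩
  have hcoa : Nat.Coprime a q := by
    have h2 : Nat.gcd a q ∣ p * a := (Nat.gcd_dvd_left a q).mul_left p
    have h3 : Nat.gcd a q ∣ q * t := (Nat.gcd_dvd_right a q).mul_right t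
    have h1 := Nat.dvd_sub h2 h3
    rw [ht, Nat.add_sub_cancel] at h1
    exact Nat.dvd_one.mp h1
  -- the quotient ring
  set I : Ideal ℤ[X] := Ideal.span {cyclotomic q ℤ, C (p : ℤ)} with hIdef
  set y : ℤ[X] ⧸ I := Ideal.Quotient.mk I X with hydef
  have hmk : ∀ u : ℤ[X], aeval y u = Ideal.Quotient.mk I u := by
    intro u
    have := Polynomial.aeval_algHom_apply (Ideal.Quotient.mkₐ ℤ I) X u
    simpa using this
  have hΦqI : cyclotomic q ℤ ∈ I := Ideal.subset_span (by simp)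
  have hCpI : C (p : ℤ) ∈ I := Ideal.subset_span (by simp)
  have hyq : y ^ q = 1 := by
    obtain ⟨w, hw⟩ := Polynomial.cyclotomic.dvd_X_pow_sub_one q ℤ
    have hmem : (X ^ q - 1 : ℤ[X]) ∈ I := hw ▸ Ideal.mul_mem_right _ _ hΦqI
    have h0 : aeval y ((X : ℤ[X]) ^ q - 1) = 0 := by
      rw [hmk]; exact Ideal.Quotient.eq_zero_iff_mem.mpr hmem
    rw [map_sub, map_pow, map_one, aeval_X, sub_eq_zero] at h0
    exact h0
  have hpS : ((p : ℤ[X] ⧸ I)) = 0 := by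
    have : Ideal.Quotient.mk I (C (p : ℤ)) = 0 := Ideal.Quotient.eq_zero_iff_mem.mpr hCpI
    rw [map_natCast (C : ℤ →+* ℤ[X]) p] at this
    rw [← map_natCast (Ideal.Quotient.mk I) p, this]
  have hΦroot : ∀ z : ℂ, IsPrimitiveRoot z q → aeval z (cyclotomic q ℤ) = 0 := by
    intro z hz
    rw [aeval_def, eval₂_eq_eval_map, map_cyclotomic]
    exact hz.isRoot_cyclotomic hq.pos
  -- aeval (y^a) of cyclotomic q is 0
  have hΦqya : aeval (y ^ a) (cyclotomic q ℤ) = 0 := by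
    obtain ⟨w, hw⟩ : cyclotomic q ℤ ∣ (cyclotomic q ℤ).comp (X ^ a) := by
      rw [Polynomial.cyclotomic_eq_minpoly hωqprim hq.pos]
      apply minpoly.isIntegrallyClosed_dvd (hωqprim.isIntegral hq.pos)
      rw [aeval_comp, map_pow, aeval_X, ← Polynomial.cyclotomic_eq_minpoly hωqprim hq.pos]
      exact hΦroot _ (hωqprim.pow_of_coprime a hcoa)
    have h1 : aeval y ((cyclotomic q ℤ).comp (X ^ a)) = 0 := by
      rw [hw, hmk]
      exact Ideal.Quotient.eq_zero_iff_mem.mpr (Ideal.mul_mem_right _ _ hΦqI)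
    rwa [aeval_comp, map_pow, aeval_X] at h1
  -- cyclotomic (p*q) ≡ (cyclotomic q)^(p-1) mod p
  have hΦpqya : aeval (y ^ a) (cyclotomic (p * q) ℤ) = 0 := by
    obtain ⟨d, hd⟩ : C (p : ℤ) ∣ cyclotomic (p * q) ℤ - (cyclotomic q ℤ) ^ (p - 1) := by
      rw [C_dvd_iff_dvd_coeff]
      intro i
      have hmap : Polynomial.map (Int.castRingHom (ZMod p)) (cyclotomic (p * q) ℤ - (cyclotomic q ℤ) ^ (p - 1)) = 0 := by
        rw [Polynomial.map_sub, Polynomial.map_pow, map_cyclotomic, map_cyclotomic,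
          mul_comm p q, Polynomial.cyclotomic_mul_prime_eq_pow_of_not_dvd (ZMod p)
            (fun h => hne ((Nat.prime_dvd_prime_iff_eq hp hq).mp h)), sub_self]
      have h := congrArg (fun φ => Polynomial.coeff φ i) hmap
      simp only [Polynomial.coeff_map, Polynomial.coeff_zero] at h
      exact_mod_cast (ZMod.intCast_zmod_eq_zero_iff_dvd _ p).mp h
    have : aeval (y ^ a) (cyclotomic (p * q) ℤ) =
        aeval (y ^ a) ((cyclotomic q ℤ) ^ (p - 1)) + aeval (y ^ a) (C (p : ℤ) * d) := by
      rw [← map_add, ← hd]; ring_nf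
    rw [this, map_pow, hΦqya, zero_pow (Nat.sub_ne_zero_of_lt hp.one_lt), map_mul, aeval_C,
      zero_add]
    have : (algebraMap ℤ (ℤ[X] ⧸ I)) (p : ℤ) = ((p : ℤ[X] ⧸ I)) := by push_cast; ring
    rw [this, hpS, zero_mul]
  -- evaluate F at y^a
  have hyap : (y ^ a) ^ p = y := by
    rw [← pow_mul, mul_comm a p, ht, pow_add, pow_one, pow_mul, hyq, one_pow, mul_one]
  have hyaq : (y ^ a) ^ q = 1 := by
    rw [← pow_mul, mul_comm a q, pow_mul, hyq, one_pow]
  have hFya : aeval y f = 0 := by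
    have h1 : aeval (y ^ a) F = 0 := by
      rw [hk, map_mul, hΦpqya, zero_mul]
    rw [hFdef, map_sub, map_mul, aeval_comp, map_pow, aeval_X, hyap, map_sub, map_one, map_pow,
      aeval_X, hyaq, sub_self, zero_mul, sub_zero] at h1
    exact h1
  have hfI : f ∈ I := by
    rw [← Ideal.Quotient.eq_zero_iff_mem, ← hmk]
    exact hFya
  rw [hIdef, Ideal.mem_span_pair] at hfI
  obtain ⟨u, v, huv⟩ := hfI
  -- conclude
  refine ⟨aeval ζ (v.comp (X ^ p)), ?_, ?_⟩
  · rw [Algebra.adjoin_singleton_eq_range_aeval]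
    exact ⟨v.comp (X ^ p), rfl⟩
  · have hΦω : aeval (primRoot q) (cyclotomic q ℤ) = 0 := by
      have := hωqprim.isRoot_cyclotomic hq.pos (R := ℂ)
      rw [aeval_def, eval₂_eq_eval_map, map_cyclotomic]
      exact this
    have := congrArg (aeval (primRoot q)) huv
    rw [map_add, map_mul, map_mul, hΦω, mul_zero, zero_add, aeval_C, hfeval] at this
    rw [← this, aeval_comp, map_pow, aeval_X, hωq]
    have hcast : (algebraMap ℤ ℂ) (p : ℤ) = (p : ℂ) := by push_cast; ring
    rw [hcast]
    ring
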